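/- In the truncation setup, assume additionally the truncated inequality ∑_{k=1}^{k₀} p_k·∫_{(−∞,r]} Q_{1,k}(u(x₂−y)) dg_k(y) ≤ (1+ε')·∑_{k=1}^{k₀} p_k·∫_{(−∞,r]} Q_{2,k}(u(x₁−y)) dg_k(y). Then there exist an integer k with 1 ≤ k ≤ k₀ and a real r' ≤ r, with r' = r whenever r' > M, such that ∫_{(−∞,r']} u(x₂−y) dg_k(y) ≤ (1+ε'')·∫_{(−∞,r']} u(x₁−y) dg_k(y). -/

import Mathlib

set_option maxHeartbeats 1000000

open MeasureTheory Set Filter Topology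

/-- The set whose infimum defines the first non-flatness place `q` to the left of `x₁`:
`{y ≥ M/2 : u(x₂−y) > (4k₀)²·u(x₁−y)}`. -/
def flatSet (k₀ : ℕ) (u : ℝ → ℝ) (x₁ x₂ M : ℝ) : Set ℝ :=
  {y : ℝ | M / 2 ≤ y ∧ (4 * (k₀ : ℝ)) ^ 2 * u (x₁ - y) < u (x₂ - y)}

private lemma pigeon (s : Finset ℕ) (p t : ℕ → ℝ) (hp : ∀ k ∈ s, 0 ≤ p k)
    (hsum : 0 < ∑ k ∈ s, p k) (h : ∑ k ∈ s, p k * t k ≤ 0) :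
    ∃ k ∈ s, t k ≤ 0 := by
  by_contra hc
  push_neg at hc
  obtain ⟨k0, hk0s, hk0⟩ : ∃ k ∈ s, 0 < p k := by
    by_contra hall
    push_neg at hall
    have h0 : ∑ k ∈ s, p k ≤ 0 := Finset.sum_nonpos fun k hk => hall k hk
    linarith
  have hpos : 0 < ∑ k ∈ s, p k * t k :=
    Finset.sum_pos' (fun k hk => mul_nonneg (hp k hk) (hc k hk).le)
      ⟨k0, hk0s, mul_pos hk0 (hc k0 hk0s)⟩
  linarith

private lemma num_bounds {η κ e c₁ kR f₀ : ℝ} (hη0 : 0 < η) (hη1 : η ≤ 1)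
    (hκ0 : 0 < κ) (hκ1 : κ ≤ 1) (he0 : 0 < e) (he1 : e ≤ 1) (hc : 1 ≤ c₁)
    (hk : 2 ≤ kR) (hf : 0 < f₀)
    (hMB : 16384 * c₁^2 * kR^5 * f₀ ≤ η^3 * κ^3 * e^2) :
    8 * c₁ * f₀ ≤ κ * η * e ∧ 16 * c₁ * kR * f₀ ≤ κ * η * e ∧
      8192 * kR^4 * c₁^2 * f₀ ≤ (κ*η)^2 * e := by
  have hc0 : (0:ℝ) < c₁ := by linarith
  have hk0 : (0:ℝ) < kR := by linarith
  have hk4 : (16:ℝ) ≤ kR^4 := by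
    have h := pow_le_pow_left₀ (by norm_num : (0:ℝ) ≤ 2) hk 4
    norm_num at h
    linarith
  have hk5 : (32:ℝ) ≤ kR^5 := by
    have h := pow_le_pow_left₀ (by norm_num : (0:ℝ) ≤ 2) hk 5
    norm_num at h
    linarith
  have hκη1 : η * κ ≤ 1 := by nlinarith [mul_nonneg hη0.le (sub_nonneg.mpr hκ1)]
  have hκηe1 : η * κ * e ≤ 1 := by
    nlinarith [mul_nonneg (mul_nonneg hη0.le hκ0.le) (sub_nonneg.mpr he1)]
  have hsq1 : (η*κ)^2 * e ≤ 1 := by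
    have h1 : (η*κ)^2 ≤ 1 := by nlinarith [mul_pos hη0 hκ0]
    nlinarith [mul_nonneg (sq_nonneg (η*κ)) (sub_nonneg.mpr he1),
      mul_pos hη0 hκ0]
  have hmain : η^3 * κ^3 * e^2 ≤ η * κ * e := by
    have h1 : η^3 * κ^3 * e^2 = (η*κ*e) * ((η*κ)^2 * e) := by ring
    have h2 : (η*κ*e) * ((η*κ)^2 * e) ≤ (η*κ*e) * 1 :=
      mul_le_mul_of_nonneg_left hsq1 (by positivity)
    linarith only [h1, h2]
  have hmain2 : η^3 * κ^3 * e^2 ≤ η^2 * κ^2 * e := by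
    have h1 : η^3 * κ^3 * e^2 = (η^2*κ^2*e) * (η*κ*e) := by ring
    have h2 : (η^2*κ^2*e) * (η*κ*e) ≤ (η^2*κ^2*e) * 1 :=
      mul_le_mul_of_nonneg_left hκηe1 (by positivity)
    linarith only [h1, h2]
  have hG1 : 8 * c₁ * f₀ ≤ 16384 * c₁^2 * kR^5 * f₀ := by
    have h1 : (8:ℝ) ≤ 16384 * (c₁ * kR^5) := by nlinarith [mul_le_mul hc hk5 (by norm_num) hc0.le]
    have h2 := mul_le_mul_of_nonneg_right h1 (mul_pos hc0 hf).le
    linarith only [h2]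
  have hG2 : 16 * c₁ * kR * f₀ ≤ 16384 * c₁^2 * kR^5 * f₀ := by
    have h1 : kR ≤ kR^5 := by nlinarith [pow_pos hk0 3, pow_pos hk0 4]
    have h2 : 16 * kR ≤ 16384 * (c₁ * kR^5) := by
      nlinarith [mul_le_mul hc h1 hk0.le hc0.le]
    have h3 := mul_le_mul_of_nonneg_right h2 (mul_pos hc0 hf).le
    linarith only [h3]
  have hG3 : 8192 * kR^4 * c₁^2 * f₀ ≤ 16384 * c₁^2 * kR^5 * f₀ := by
    have h1 : 2 * kR^4 ≤ kR^5 := by nlinarith [pow_pos hk0 4]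
    have h2 := mul_le_mul_of_nonneg_right h1 (mul_pos (mul_pos hc0 hc0) hf).le
    linarith only [h2, (mul_pos (mul_pos (pow_pos hk0 5) (mul_pos hc0 hc0)) hf).le]
  refine ⟨by linarith only [hG1, hMB, hmain], by linarith only [hG2, hMB, hmain],
    by linarith only [hG3, hMB, hmain2]⟩


private lemma integ01 {μ : Measure ℝ} (_hμ : IsFiniteMeasure μ) {f : ℝ → ℝ}
    (hf : Measurable f) (h0 : ∀ y, 0 ≤ f y) (h1 : ∀ y, f y ≤ 1) :
    Integrable f μ := by
  refine (integrable_const (1:ℝ)).mono' hf.aestronglyMeasurable ?_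
  filter_upwards with y
  rw [Real.norm_eq_abs, abs_of_nonneg (h0 y)]
  exact h1 y

/-- linearization lemma: in the truncation setup, if additionally the
truncated inequality
`∑_k p_k·∫_{(−∞,r]} Q_{1,k}(u(x₂−y)) dg_k(y) ≤ (1+ε')·∑_k p_k·∫_{(−∞,r]} Q_{2,k}(u(x₁−y)) dg_k(y)`
holds, then there are an integer `1 ≤ k ≤ k₀` and a real `r' ≤ r`, with `r' = r`
whenever `r' > M`, such that
`∫_{(−∞,r']} u(x₂−y) dg_k(y) ≤ (1+ε'')·∫_{(−∞,r']} u(x₁−y) dg_k(y)`. -/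
theorem stmt_14
    (k₀ : ℕ) (hk₀ : 1 < k₀)
    (m₀ ε₀ a M₀ c₁ ε₁ b M κ : ℝ)
    (hm₀ : 1 < m₀) (hε₀ : 0 < ε₀ ∧ ε₀ < min ((1 / 4) * Real.log m₀) 1)
    (ha : 0 < a) (hM₀ : 0 < M₀) (hc₁ : 1 ≤ c₁)
    (hc₁' : ∀ k : ℕ, 1 ≤ k → k ≤ k₀ → ∀ w : ℝ, 0 ≤ w → w ≤ 1 →
      (k : ℝ) * w - c₁ * w ^ 2 ≤ 1 - (1 - w) ^ k ∧ 1 - (1 - w) ^ k ≤ (k : ℝ) * w)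
    (hε₁ : 0 < ε₁ ∧ ε₁ < 1 / 100) (hb : 1 < b) (hM : 100 < M)
    (hκ : 0 < κ ∧ κ < 1 / 100)
    (p : ℕ → ℝ) (hp : ∀ k ∈ Finset.Icc 1 k₀, 0 ≤ p k)
    (hpsum : ∑ k ∈ Finset.Icc 1 k₀, p k = 1)
    (hpmean : m₀ < ∑ k ∈ Finset.Icc 1 k₀, (k : ℝ) * p k)
    -- conditions (i)–(vi) on the parameters
    (hcondi : 4 * M₀ < M ∧ (4 * (k₀ : ℝ)) ^ 4 * Real.exp (-a * M / 2) ≤ 1 / 100)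
    (hcondii : 8 * (2 * (k₀ : ℝ)) ^ ((5 : ℝ) / 2) *
        ε₁ ^ (1 / (2 * Real.log b) - 3 / 2 : ℝ) / ((1 - ε₀) * κ ^ ((3 : ℝ) / 2))
      < 1 / (2 * c₁))
    (hcondiii : c₁ * ((1 + ε₁) / (1 - ε₀)) * ε₁ ^ (1 / Real.log b : ℝ)
      ≤ (∑ k ∈ Finset.Icc 1 k₀, (k : ℝ) * p k) - m₀)
    (hcondiv : 2 * (ε₁ + ε₀) + 6 * κ / Real.log b ≤ Real.log m₀ / 2)
    (hcondv : 2 * (ε₁ + ε₀ + Real.log (4 * (k₀ : ℝ))) - Real.log κ / Real.log b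
      ≤ a * M / (16 * Real.log b))
    (hcondvi : 2 * Real.log (4 * (k₀ : ℝ)) / M ≤ a / (16 * Real.log b))
    -- the displacement measures
    (g : ℕ → Measure ℝ) (hg : ∀ k, IsProbabilityMeasure (g k))
    (hgtail0 : ∀ k : ℕ, 1 ≤ k → k ≤ k₀ → 1 - ε₀ ≤ ((g k) (Ioi (0 : ℝ))).toReal)
    (hgdecay : ∀ k : ℕ, 1 ≤ k → k ≤ k₀ → ∀ M' x : ℝ, M₀ < M' → 0 ≤ x →
      ((g k) (Ioi (x + M'))).toReal ≤ Real.exp (-a * M') * ((g k) (Ioi x)).toReal)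
    -- the two functions and the sandwich bound
    (u v : ℝ → ℝ)
    (hu01 : ∀ x, u x ∈ Icc (0 : ℝ) 1) (hv01 : ∀ x, v x ∈ Icc (0 : ℝ) 1)
    (huanti : Antitone u) (hvanti : Antitone v)
    (hurc : ∀ x, ContinuousWithinAt u (Ici x) x)
    (hvrc : ∀ x, ContinuousWithinAt v (Ici x) x)
    (hsandwich : ∀ x : ℝ,
      ∑ k ∈ Finset.Icc 1 k₀, p k * ∫ y : ℝ, (1 - (1 - u (x - y)) ^ k) ∂(g k) ≤ v x ∧
      v x ≤ ∑ k ∈ Finset.Icc 1 k₀, p k * ∫ y : ℝ, (k : ℝ) * u (x - y) ∂(g k))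
    -- truncation setup
    (x₁ x₂ : ℝ) (hx₂ : x₂ = x₁ - M) (hvx₁ : 0 < v x₁)
    (ε : ℝ) (hεdef : ε = v x₂ / v x₁ - 1) (hεrange : 0 ≤ ε ∧ ε < ε₁)
    (f₀ : ℝ) (hf₀ : f₀ = v x₁)
    (hf₀small : f₀ < (ε₁ - ε) ^ (1 / Real.log b : ℝ) * Real.exp (-Real.log 2))
    (δ ε' ε'' ε3 : ℝ) (hδ : δ = κ * (ε₁ - ε)) (hε' : ε' = ε + δ)
    (hε'' : ε'' = ε + 2 * δ) (hε3 : ε3 = ε + 3 * δ)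
    (y₀ : ℝ) (hy₀ : y₀ = (1 / a) * Real.log (2 * (k₀ : ℝ) / (δ * f₀)))
    (r : ℝ)
    (hrne : (flatSet k₀ u x₁ x₂ M).Nonempty →
      (4 * (k₀ : ℝ) * u (x₁ - (sInf (flatSet k₀ u x₁ x₂ M) + M / 2))
          ≤ Function.leftLim u (x₂ - sInf (flatSet k₀ u x₁ x₂ M)) →
        r = min y₀ (sInf (flatSet k₀ u x₁ x₂ M))) ∧
      (¬ 4 * (k₀ : ℝ) * u (x₁ - (sInf (flatSet k₀ u x₁ x₂ M) + M / 2))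
          ≤ Function.leftLim u (x₂ - sInf (flatSet k₀ u x₁ x₂ M)) →
        r = min y₀ (sInf (flatSet k₀ u x₁ x₂ M) - M / 2)))
    (hrem : ¬ (flatSet k₀ u x₁ x₂ M).Nonempty → r = y₀)
    -- the additional hypothesis: the truncated flatness inequality
    (htrunc :
      ∑ k ∈ Finset.Icc 1 k₀, p k * ∫ y in Iic r, (1 - (1 - u (x₂ - y)) ^ k) ∂(g k)
        ≤ (1 + ε') *
          ∑ k ∈ Finset.Icc 1 k₀, p k * ∫ y in Iic r, (k : ℝ) * u (x₁ - y) ∂(g k)) :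
    ∃ k : ℕ, 1 ≤ k ∧ k ≤ k₀ ∧ ∃ r' : ℝ, r' ≤ r ∧ (M < r' → r' = r) ∧
      ∫ y in Iic r', u (x₂ - y) ∂(g k)
        ≤ (1 + ε'') * ∫ y in Iic r', u (x₁ - y) ∂(g k) := by
  classical
  obtain ⟨hε₀pos, hε₀lt'⟩ := hε₀
  have hε₀1 : ε₀ < 1 := lt_of_lt_of_le hε₀lt' (min_le_right _ _)
  have h1ε₀ : 0 < 1 - ε₀ := by linarith
  have h1ε₀le : 1 - ε₀ ≤ 1 := by linarith
  obtain ⟨hε₁pos, hε₁lt⟩ := hε₁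
  obtain ⟨hκpos, hκlt⟩ := hκ
  obtain ⟨hεnn, hεlt⟩ := hεrange
  have hηpos : 0 < ε₁ - ε := by linarith
  have hηle1 : ε₁ - ε ≤ 1 := by linarith
  have hδpos : 0 < δ := by rw [hδ]; positivity
  have hδle : δ ≤ 1 / 100 := by
    rw [hδ]
    have h1 := mul_le_mul_of_nonneg_left hηle1 hκpos.le
    linarith only [h1, hκlt]
  have hc₁pos : (0 : ℝ) < c₁ := lt_of_lt_of_le one_pos hc₁
  have hε'nn : 0 ≤ ε' := by rw [hε']; linarith
  have hε'le : ε' ≤ 1 := by rw [hε']; linarith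
  have hδlt1 : δ < 1 := by linarith
  have hδc : δ ≤ c₁ := by linarith
  have hk₀R : (2 : ℝ) ≤ (k₀ : ℝ) := by exact_mod_cast hk₀
  have h4k₀1 : (1 : ℝ) ≤ 4 * (k₀ : ℝ) := by linarith
  have h4k₀pos : (0 : ℝ) < 4 * (k₀ : ℝ) := by linarith
  have hMpos : (0 : ℝ) < M := by linarith
  have hf₀pos : 0 < f₀ := by rw [hf₀]; exact hvx₁
  have hf₀le1 : f₀ ≤ 1 := by rw [hf₀]; exact (hv01 x₁).2
  set τ : ℝ := δ / (4 * c₁) with hτdef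
  have hτpos : 0 < τ := by positivity
  have hτc₁ : c₁ * τ = δ / 4 := by rw [hτdef]; field_simp
  set β : ℝ := 2 * f₀ / (1 - ε₀) with hβdef
  have hβpos : 0 < β := by positivity
  set K := Finset.Icc 1 k₀ with hK
  have hmem : ∀ k ∈ K, 1 ≤ k ∧ k ≤ k₀ := fun k hk => Finset.mem_Icc.mp hk
  -- measurability and integrability
  have hmu : Measurable u := huanti.measurable
  have hm2 : Measurable fun y : ℝ => u (x₂ - y) := hmu.comp (measurable_const.sub measurable_id)
  have hm1 : Measurable fun y : ℝ => u (x₁ - y) := hmu.comp (measurable_const.sub measurable_id)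
  have hu0 : ∀ t : ℝ, 0 ≤ u t := fun t => (hu01 t).1
  have hu1 : ∀ t : ℝ, u t ≤ 1 := fun t => (hu01 t).2
  have hQ0 : ∀ (k : ℕ) (w : ℝ), 0 ≤ w → w ≤ 1 → 0 ≤ 1 - (1 - w) ^ k := by
    intro k w h0 h1
    have h2 : (1 - w) ^ k ≤ 1 := pow_le_one₀ (by linarith) (by linarith)
    linarith
  have hQ1 : ∀ (k : ℕ) (w : ℝ), 0 ≤ w → w ≤ 1 → 1 - (1 - w) ^ k ≤ 1 := by
    intro k w h0 h1
    have h2 : (0:ℝ) ≤ (1 - w) ^ k := pow_nonneg (by linarith) k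
    linarith
  have hQge : ∀ (k : ℕ), 1 ≤ k → ∀ w : ℝ, 0 ≤ w → w ≤ 1 → w ≤ 1 - (1 - w) ^ k := by
    intro k hk w h0 h1
    have h2 : (1 - w) ^ k ≤ (1 - w) ^ 1 :=
      pow_le_pow_of_le_one (by linarith) (by linarith) hk
    rw [pow_one] at h2
    linarith
  have hPfin : ∀ k, IsFiniteMeasure (g k) := fun k => by haveI := hg k; infer_instance
  have hint2 : ∀ k, Integrable (fun y => u (x₂ - y)) (g k) := fun k =>
    integ01 (hPfin k) hm2 (fun y => hu0 _) (fun y => hu1 _)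
  have hint1 : ∀ k, Integrable (fun y => u (x₁ - y)) (g k) := fun k =>
    integ01 (hPfin k) hm1 (fun y => hu0 _) (fun y => hu1 _)
  have hm2sq : Measurable fun y : ℝ => (u (x₂ - y))^2 := hm2.pow_const 2
  have hint2sq : ∀ k, Integrable (fun y => (u (x₂ - y))^2) (g k) := fun k =>
    integ01 (hPfin k) hm2sq (fun y => sq_nonneg _) (fun y => pow_le_one₀ (hu0 _) (hu1 _))
  have hmQ : ∀ k : ℕ, Measurable fun y : ℝ => 1 - (1 - u (x₂ - y)) ^ k := fun k =>
    measurable_const.sub ((measurable_const.sub hm2).pow_const k)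
  have hintQ : ∀ k : ℕ, Integrable (fun y => 1 - (1 - u (x₂ - y)) ^ k) (g k) := fun k =>
    integ01 (hPfin k) (hmQ k) (fun y => hQ0 _ _ (hu0 _) (hu1 _))
      (fun y => hQ1 _ _ (hu0 _) (hu1 _))
  have hmono2 : ∀ {y z : ℝ}, y ≤ z → u (x₂ - y) ≤ u (x₂ - z) := by
    intro y z h
    exact huanti (by linarith)
  -- v x₂ and smallness of u x₂
  have hvx₂ : v x₂ = (1 + ε) * f₀ := by
    rw [hεdef, hf₀]
    field_simp
    ring
  have hux₂ : u x₂ ≤ β := by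
    have key : (1 - ε₀) * u x₂ ≤ v x₂ := by
      have h1 := (hsandwich x₂).1
      have h2 : ∀ k ∈ K, (1 - ε₀) * u x₂ ≤ ∫ y : ℝ, (1 - (1 - u (x₂ - y)) ^ k) ∂(g k) := by
        intro k hk
        obtain ⟨hk1, hk2⟩ := hmem k hk
        haveI := hg k
        have s0 : ∫ y in Ioi (0:ℝ), (1 - (1 - u (x₂ - y)) ^ k) ∂(g k)
            ≤ ∫ y : ℝ, (1 - (1 - u (x₂ - y)) ^ k) ∂(g k) :=
          setIntegral_le_integral (hintQ k) (ae_of_all _ fun y => hQ0 _ _ (hu0 _) (hu1 _))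
        have s1 : ∫ y in Ioi (0:ℝ), u x₂ ∂(g k)
            ≤ ∫ y in Ioi (0:ℝ), (1 - (1 - u (x₂ - y)) ^ k) ∂(g k) := by
          refine setIntegral_mono_on ((integrable_const _).integrableOn)
            ((hintQ k).integrableOn) measurableSet_Ioi ?_
          intro y hy
          have h3 : u x₂ ≤ u (x₂ - y) := by
            have h4 : u (x₂ - 0) ≤ u (x₂ - y) := hmono2 (le_of_lt hy)
            rwa [sub_zero] at h4
          exact le_trans h3 (hQge k hk1 _ (hu0 _) (hu1 _))
        have s2 : ∫ y in Ioi (0:ℝ), u x₂ ∂(g k) = ((g k) (Ioi 0)).toReal * u x₂ := by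
          rw [setIntegral_const, smul_eq_mul]
          rfl
        have s3 : (1 - ε₀) * u x₂ ≤ ((g k) (Ioi 0)).toReal * u x₂ :=
          mul_le_mul_of_nonneg_right (hgtail0 k hk1 hk2) (hu0 _)
        rw [s2] at s1
        exact le_trans (le_trans s3 s1) s0
      calc (1 - ε₀) * u x₂ = (∑ k ∈ K, p k) * ((1 - ε₀) * u x₂) := by rw [hpsum, one_mul]
        _ = ∑ k ∈ K, p k * ((1 - ε₀) * u x₂) := by rw [Finset.sum_mul]
        _ ≤ ∑ k ∈ K, p k * ∫ y : ℝ, (1 - (1 - u (x₂ - y)) ^ k) ∂(g k) :=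
            Finset.sum_le_sum fun k hk => mul_le_mul_of_nonneg_left (h2 k hk) (hp k hk)
        _ ≤ v x₂ := h1
    rw [hβdef, le_div_iff₀ h1ε₀]
    rw [hvx₂] at key
    have h2f : ε * f₀ ≤ 1 * f₀ :=
      mul_le_mul_of_nonneg_right (by linarith only [hεlt, hε₁lt]) hf₀pos.le
    linarith only [key, h2f]
  -- the master smallness bound on f₀
  have hlogb : 0 < Real.log b := Real.log_pos hb
  have hMB : 16384 * c₁^2 * (k₀:ℝ)^5 * f₀ ≤ (ε₁ - ε)^3 * κ^3 * (1 - ε₀)^2 := by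
    set L : ℝ := 1 / Real.log b with hL
    have hexpeq : 1 / (2 * Real.log b) - 3 / 2 = (L - 3)/2 := by
      rw [hL]; field_simp
    rw [hexpeq] at hcondii
    have hkp : (0:ℝ) < (2*(k₀:ℝ)) ^ ((5:ℝ)/2) := Real.rpow_pos_of_pos (by linarith) _
    have hκp : (0:ℝ) < κ ^ ((3:ℝ)/2) := Real.rpow_pos_of_pos hκpos _
    have hεp : (0:ℝ) ≤ ε₁ ^ ((L-3)/2) := Real.rpow_nonneg hε₁pos.le _
    have hPbd : ε₁ ^ ((L - 3)/2) < (1-ε₀) * κ ^ ((3:ℝ)/2) / (16 * c₁ * (2*(k₀:ℝ)) ^ ((5:ℝ)/2)) := by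
      rw [div_lt_div_iff₀ (by positivity) (by positivity)] at hcondii
      rw [lt_div_iff₀ (by positivity)]
      linarith only [hcondii]
    have hL3 : (3:ℝ) ≤ L := by
      by_contra hcon
      push_neg at hcon
      have he : (L-3)/2 < 0 := by linarith
      have h1 : (1:ℝ) < ε₁ ^ ((L-3)/2) :=
        (Real.one_lt_rpow_iff_of_pos hε₁pos).mpr (Or.inr ⟨by linarith, he⟩)
      have hκ1 : κ ^ ((3:ℝ)/2) ≤ 1 := Real.rpow_le_one hκpos.le (by linarith) (by norm_num)
      have hk1 : (1:ℝ) ≤ (2*(k₀:ℝ)) ^ ((5:ℝ)/2) := by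
        have h := Real.rpow_le_rpow (by norm_num : (0:ℝ) ≤ 1)
          (by linarith : (1:ℝ) ≤ 2*(k₀:ℝ)) (by norm_num : (0:ℝ) ≤ (5:ℝ)/2)
        rwa [Real.one_rpow] at h
      have hub : (1-ε₀) * κ ^ ((3:ℝ)/2) / (16 * c₁ * (2*(k₀:ℝ)) ^ ((5:ℝ)/2)) ≤ 1/16 := by
        rw [div_le_iff₀ (by positivity)]
        have u1 : (1-ε₀) * κ ^ ((3:ℝ)/2) ≤ 1 * 1 :=
          mul_le_mul h1ε₀le hκ1 (Real.rpow_nonneg hκpos.le _) (by norm_num)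
        have u2 : (1:ℝ) * 1 ≤ c₁ * (2*(k₀:ℝ)) ^ ((5:ℝ)/2) :=
          mul_le_mul hc₁ hk1 (by norm_num) hc₁pos.le
        linarith only [u1, u2]
      linarith
    -- chain
    have hfL : f₀ < (ε₁ - ε) ^ (L:ℝ) * (1/2) := by
      have : Real.exp (-Real.log 2) = 1/2 := by
        rw [Real.exp_neg, Real.exp_log (by norm_num : (0:ℝ) < 2)]
        norm_num
      rw [hL]
      rw [← this]
      exact hf₀small
    have e1 : (ε₁ - ε) ^ (L:ℝ) = (ε₁-ε)^((3:ℝ)) * (ε₁-ε)^(L-3) := by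
      rw [← Real.rpow_add hηpos]; norm_num
    have e2 : (ε₁-ε)^((3:ℝ)) = (ε₁-ε)^(3:ℕ) := by
      rw [show ((3:ℝ)) = ((3:ℕ):ℝ) by norm_num, Real.rpow_natCast]
    have e3 : (ε₁-ε)^(L-3) ≤ ε₁^(L-3) :=
      Real.rpow_le_rpow hηpos.le (by linarith) (by linarith)
    have e4 : ε₁^(L-3) = (ε₁ ^ ((L-3)/2))^(2:ℕ) := by
      rw [← Real.rpow_natCast (ε₁ ^ ((L-3)/2)) 2, ← Real.rpow_mul hε₁pos.le]
      norm_num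
    have e5 : (ε₁ ^ ((L-3)/2))^(2:ℕ)
        ≤ ((1-ε₀) * κ ^ ((3:ℝ)/2) / (16 * c₁ * (2*(k₀:ℝ)) ^ ((5:ℝ)/2)))^(2:ℕ) :=
      pow_le_pow_left₀ hεp hPbd.le 2
    have e6 : ((1-ε₀) * κ ^ ((3:ℝ)/2) / (16 * c₁ * (2*(k₀:ℝ)) ^ ((5:ℝ)/2)))^(2:ℕ)
        = (1-ε₀)^2 * κ^3 / (256 * c₁^2 * (32 * (k₀:ℝ)^5)) := by
      have eκ : (κ ^ ((3:ℝ)/2))^(2:ℕ) = κ^(3:ℕ) := by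
        rw [← Real.rpow_natCast (κ ^ ((3:ℝ)/2)) 2, ← Real.rpow_mul hκpos.le]
        norm_num
      have ek : ((2*(k₀:ℝ)) ^ ((5:ℝ)/2))^(2:ℕ) = 32 * (k₀:ℝ)^5 := by
        rw [← Real.rpow_natCast ((2*(k₀:ℝ)) ^ ((5:ℝ)/2)) 2, ← Real.rpow_mul (by linarith)]
        norm_num
        ring
      rw [div_pow, mul_pow, mul_pow, mul_pow, eκ, ek]
      norm_num
    have e7 : (ε₁ - ε) ^ (L:ℝ)
        ≤ (ε₁-ε)^(3:ℕ) * ((1-ε₀)^2 * κ^3 / (256 * c₁^2 * (32 * (k₀:ℝ)^5))) := by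
      rw [e1, e2]
      have h8 : (ε₁-ε)^(L-3) ≤ (1-ε₀)^2 * κ^3 / (256 * c₁^2 * (32 * (k₀:ℝ)^5)) := by
        rw [← e6]
        exact le_trans e3 (le_trans (le_of_eq e4) e5)
      exact mul_le_mul_of_nonneg_left h8 (by positivity)
    have e8 : f₀ ≤ (ε₁-ε)^(3:ℕ) * ((1-ε₀)^2 * κ^3 / (256 * c₁^2 * (32 * (k₀:ℝ)^5))) * (1/2) := by
      have := mul_le_mul_of_nonneg_right e7 (by norm_num : (0:ℝ) ≤ 1/2)
      linarith [hfL]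
    have hc₁ne : c₁ ≠ 0 := ne_of_gt hc₁pos
    have hk₀ne : ((k₀:ℝ)) ≠ 0 := by positivity
    have hD : (0:ℝ) < 16384 * c₁^2 * (k₀:ℝ)^5 := by positivity
    calc 16384 * c₁^2 * (k₀:ℝ)^5 * f₀
        ≤ 16384 * c₁^2 * (k₀:ℝ)^5 *
          ((ε₁-ε)^(3:ℕ) * ((1-ε₀)^2 * κ^3 / (256 * c₁^2 * (32 * (k₀:ℝ)^5))) * (1/2)) := by
          linarith only [mul_le_mul_of_nonneg_left e8 hD.le]
      _ = (ε₁ - ε)^3 * κ^3 * (1 - ε₀)^2 := by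
          field_simp
          ring
  -- corollaries of hMB
  have hk₀5 : (32:ℝ) ≤ (k₀:ℝ)^5 := by
    have h1 : (2:ℝ)^5 ≤ (k₀:ℝ)^5 := pow_le_pow_left₀ (by norm_num) hk₀R 5
    norm_num at h1
    exact h1
  have hk₀4 : (16:ℝ) ≤ (k₀:ℝ)^4 := by
    have h1 : (2:ℝ)^4 ≤ (k₀:ℝ)^4 := pow_le_pow_left₀ (by norm_num) hk₀R 4
    norm_num at h1
    exact h1
  obtain ⟨hnb1, hnb2, hnb3⟩ := num_bounds hηpos hηle1 hκpos (by linarith) h1ε₀ h1ε₀le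
    hc₁ hk₀R hf₀pos hMB
  have hβτ : β ≤ τ := by
    rw [hβdef, hτdef, div_le_div_iff₀ h1ε₀ (by positivity), hδ]
    linarith only [hnb1]
  have hN4 : 2 * (k₀:ℝ) * β ≤ τ := by
    have e0 : 2 * (k₀:ℝ) * β = (4*(k₀:ℝ)*f₀)/(1-ε₀) := by
      rw [hβdef]; field_simp; ring
    rw [e0, hτdef, div_le_div_iff₀ h1ε₀ (by positivity), hδ]
    linarith only [hnb2]
  have hN1' : 8192 * (k₀:ℝ)^4 * c₁^2 * f₀ ≤ δ^2 * (1 - ε₀) := by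
    rw [hδ]
    have : (κ * (ε₁ - ε))^2 * (1 - ε₀) = (κ*(ε₁-ε))^2 * (1-ε₀) := rfl
    linarith only [hnb3]
  -- facts about a*M
  have hlog4 : (0:ℝ) ≤ Real.log (4*(k₀:ℝ)) := Real.log_nonneg h4k₀1
  have haM : 8 * Real.log (4*(k₀:ℝ)) ≤ a * M := by
    have h2 := hcondi.2
    have h3 : (0:ℝ) < Real.exp (-a*M/2) := Real.exp_pos _
    have h5 : Real.exp (-a*M/2) * Real.exp (a*M/2) = 1 := by
      rw [← Real.exp_add]; ring_nf; exact Real.exp_zero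
    have h1 : (4*(k₀:ℝ))^4 ≤ Real.exp (a*M/2) := by
      nlinarith only [h2, h5, Real.exp_pos (a*M/2), pow_pos h4k₀pos 4, h3]
    have h6 : Real.log ((4*(k₀:ℝ))^4) ≤ a*M/2 := by
      calc Real.log ((4*(k₀:ℝ))^4) ≤ Real.log (Real.exp (a*M/2)) :=
            Real.log_le_log (by positivity) h1
        _ = a*M/2 := Real.log_exp _
    rw [Real.log_pow] at h6
    push_cast at h6
    linarith
  have haMpos : 0 < a * M := mul_pos ha hMpos
  have hexpaM2 : Real.exp (-a*M/2) ≤ 1/100 := by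
    have h2 := hcondi.2
    have h14 : (1:ℝ) ≤ (4*(k₀:ℝ))^4 := one_le_pow₀ h4k₀1
    nlinarith only [h2, h14, Real.exp_pos (-a*M/2)]
  -- the final pigeonhole step
  have final : ∀ c : ℝ,
      (∑ k ∈ K, p k * ∫ y in Iic c, (1 - (1 - u (x₂ - y)) ^ k) ∂(g k)
        ≤ (1 + ε') * ∑ k ∈ K, p k * ∫ y in Iic c, (k : ℝ) * u (x₁ - y) ∂(g k)) →
      (∀ k ∈ K, c₁ * ∫ y in Iic c, (u (x₂ - y))^2 ∂(g k)
        ≤ δ/2 * ∫ y in Iic c, u (x₂ - y) ∂(g k)) →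
      ∃ k, 1 ≤ k ∧ k ≤ k₀ ∧
        ∫ y in Iic c, u (x₂ - y) ∂(g k) ≤ (1 + ε'') * ∫ y in Iic c, u (x₁ - y) ∂(g k) := by
    intro c H1 H2
    set A : ℕ → ℝ := fun k => ∫ y in Iic c, u (x₂ - y) ∂(g k) with hA
    set B : ℕ → ℝ := fun k => ∫ y in Iic c, u (x₁ - y) ∂(g k) with hB
    set QQ : ℕ → ℝ := fun k => ∫ y in Iic c, (1 - (1 - u (x₂ - y)) ^ k) ∂(g k) with hQd
    set E : ℕ → ℝ := fun k => ∫ y in Iic c, (u (x₂ - y))^2 ∂(g k) with hE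
    have hBk : ∀ k : ℕ, (∫ y in Iic c, (k : ℝ) * u (x₁ - y) ∂(g k)) = (k:ℝ) * B k := by
      intro k
      rw [hB]
      exact integral_const_mul _ _
    have hAnn : ∀ k, 0 ≤ A k := fun k => integral_nonneg fun y => hu0 _
    have hBnn : ∀ k, 0 ≤ B k := fun k => integral_nonneg fun y => hu0 _
    have hAQ : ∀ k ∈ K, A k ≤ QQ k := by
      intro k hk
      refine integral_mono ((hint2 k).integrableOn) ((hintQ k).integrableOn) ?_
      intro y
      exact hQge k (hmem k hk).1 _ (hu0 _) (hu1 _)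
    have hlin : ∀ k ∈ K, (k:ℝ) * A k - c₁ * E k ≤ QQ k := by
      intro k hk
      have h1 : ∫ y in Iic c, ((k:ℝ) * u (x₂ - y) - c₁ * (u (x₂ - y))^2) ∂(g k) ≤ QQ k := by
        refine integral_mono ?_ ((hintQ k).integrableOn) ?_
        · exact (((hint2 k).const_mul _).sub ((hint2sq k).const_mul _)).integrableOn
        · intro y
          exact (hc₁' k (hmem k hk).1 (hmem k hk).2 _ (hu0 _) (hu1 _)).1
      rw [integral_sub (((hint2 k).const_mul _).integrableOn) (((hint2sq k).const_mul _).integrableOn),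
        integral_const_mul, integral_const_mul] at h1
      exact h1
    set SB := ∑ k ∈ K, p k * ((k:ℝ) * B k) with hSB
    have hSBnn : 0 ≤ SB :=
      Finset.sum_nonneg fun k hk =>
        mul_nonneg (hp k hk) (mul_nonneg (by positivity) (hBnn k))
    have hH1' : ∑ k ∈ K, p k * QQ k ≤ (1 + ε') * SB := by
      have h0 : ∑ k ∈ K, p k * ∫ y in Iic c, (k : ℝ) * u (x₁ - y) ∂(g k) = SB := by
        refine Finset.sum_congr rfl fun k hk => ?_
        rw [hBk]
      rw [h0] at H1
      exact H1
    have hstep1 : ∑ k ∈ K, p k * ((k:ℝ) * A k)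
        ≤ ∑ k ∈ K, p k * QQ k + ∑ k ∈ K, p k * (c₁ * E k) := by
      rw [← Finset.sum_add_distrib]
      refine Finset.sum_le_sum fun k hk => ?_
      have h1 := hlin k hk
      have h2 := hp k hk
      nlinarith only [h1, h2]
    have hstep2 : ∑ k ∈ K, p k * (c₁ * E k) ≤ δ/2 * ∑ k ∈ K, p k * QQ k := by
      rw [Finset.mul_sum]
      refine Finset.sum_le_sum fun k hk => ?_
      have h2 := H2 k hk
      have h3 : δ/2 * A k ≤ δ/2 * QQ k :=
        mul_le_mul_of_nonneg_left (hAQ k hk) (by positivity)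
      have h4 := hp k hk
      nlinarith only [h2, h3, h4]
    have hQsnn : 0 ≤ ∑ k ∈ K, p k * QQ k :=
      Finset.sum_nonneg fun k hk => mul_nonneg (hp k hk) (le_trans (hAnn k) (hAQ k hk))
    have htotal : ∑ k ∈ K, p k * ((k:ℝ) * A k) ≤ (1 + ε'') * SB := by
      have h5 : ∑ k ∈ K, p k * ((k:ℝ) * A k) ≤ (1 + δ/2) * ((1+ε') * SB) := by
        have h6 : ∑ k ∈ K, p k * ((k:ℝ) * A k)
            ≤ ∑ k ∈ K, p k * QQ k + δ/2 * ∑ k ∈ K, p k * QQ k := by linarith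
        have h7 : ∑ k ∈ K, p k * QQ k + δ/2 * ∑ k ∈ K, p k * QQ k
            = (1 + δ/2) * ∑ k ∈ K, p k * QQ k := by ring
        rw [h7] at h6
        refine le_trans h6 (mul_le_mul_of_nonneg_left hH1' (by linarith))
      have h8 : (1 + δ/2) * (1+ε') ≤ 1 + ε'' := by
        rw [hε'', hε']
        have h9 : 0 ≤ δ * (1 - ε - δ) :=
          mul_nonneg hδpos.le (by linarith only [hεlt, hε₁lt, hδle])
        nlinarith only [h9]
      linarith only [h5, mul_le_mul_of_nonneg_right h8 hSBnn]
    have hps : (0:ℝ) < ∑ k ∈ K, p k := by rw [hpsum]; norm_num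
    have hsum0 : ∑ k ∈ K, p k * ((k:ℝ) * A k - (1+ε'') * ((k:ℝ) * B k)) ≤ 0 := by
      have h9 : ∑ k ∈ K, p k * ((k:ℝ)*A k - (1+ε'')*((k:ℝ)*B k))
          = ∑ k ∈ K, p k * ((k:ℝ)*A k) - (1+ε'') * SB := by
        rw [hSB, Finset.mul_sum, ← Finset.sum_sub_distrib]
        exact Finset.sum_congr rfl fun k hk => by ring
      rw [h9]
      linarith
    obtain ⟨k, hkK, hkle⟩ := pigeon K p _ hp hps hsum0
    obtain ⟨hk1, hk2⟩ := hmem k hkK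
    refine ⟨k, hk1, hk2, ?_⟩
    have hkpos : (0:ℝ) < (k:ℝ) := by
      have : (1:ℝ) ≤ (k:ℝ) := by exact_mod_cast hk1
      linarith
    have h10 : (k:ℝ) * A k ≤ (k:ℝ) * ((1+ε'') * B k) := by linarith only [hkle]
    exact le_of_mul_le_mul_left h10 hkpos
  -- the crossing point ρ
  set Sset : Set ℝ := {y : ℝ | y ≤ r ∧ u (x₂ - y) ≤ τ} with hSset
  have hminS : min 0 r ∈ Sset := by
    constructor
    · exact min_le_right _ _
    · have h1 : u (x₂ - min 0 r) ≤ u (x₂ - 0) := hmono2 (min_le_left _ _)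
      rw [sub_zero] at h1
      exact le_trans (le_trans h1 hux₂) hβτ
  have hSne : Sset.Nonempty := ⟨_, hminS⟩
  have hSbdd : BddAbove Sset := ⟨r, fun y hy => hy.1⟩
  set ρ := sSup Sset with hρ
  have hρler : ρ ≤ r := csSup_le hSne fun y hy => hy.1
  have hρτ : u (x₂ - ρ) ≤ τ := by
    obtain ⟨xs, _hxsmono, hxstend, hxsmem⟩ := exists_seq_tendsto_sSup hSne hSbdd
    have h1 : Tendsto (fun n => x₂ - xs n) atTop (𝓝[Ici (x₂ - ρ)] (x₂ - ρ)) := by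
      rw [tendsto_nhdsWithin_iff]
      constructor
      · exact tendsto_const_nhds.sub hxstend
      · filter_upwards with n
        have h2 : xs n ≤ ρ := le_csSup hSbdd (hxsmem n)
        simp only [mem_Ici]
        linarith
    have h2 : Tendsto (fun n => u (x₂ - xs n)) atTop (𝓝 (u (x₂ - ρ))) :=
      ((hurc (x₂ - ρ)).tendsto).comp h1
    exact le_of_tendsto h2 (Eventually.of_forall fun n => (hxsmem n).2)
  have hIicρ : ∀ y ≤ ρ, u (x₂ - y) ≤ τ := fun y hy => le_trans (hmono2 hy) hρτ
  have hstripτ : ∀ y, ρ < y → y ≤ r → τ < u (x₂ - y) := by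
    intro y h1 h2
    by_contra h3
    push_neg at h3
    have h4 : y ∈ Sset := ⟨h2, h3⟩
    have h5 := le_csSup hSbdd h4
    linarith
  -- absorption bound
  have habs : ∀ t : ℝ, (∀ y ≤ t, u (x₂ - y) ≤ τ) → ∀ k : ℕ,
      c₁ * ∫ y in Iic t, (u (x₂ - y))^2 ∂(g k) ≤ δ/4 * ∫ y in Iic t, u (x₂ - y) ∂(g k) := by
    intro t ht k
    have h1 : ∫ y in Iic t, (u (x₂ - y))^2 ∂(g k) ≤ ∫ y in Iic t, τ * u (x₂ - y) ∂(g k) := by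
      refine setIntegral_mono_on ((hint2sq k).integrableOn)
        (((hint2 k).const_mul τ).integrableOn) measurableSet_Iic ?_
      intro y hy
      have h2 := ht y hy
      have h3 := hu0 (x₂ - y)
      nlinarith only [h2, h3]
    rw [integral_const_mul] at h1
    have h4 : 0 ≤ ∫ y in Iic t, u (x₂ - y) ∂(g k) := integral_nonneg fun y => hu0 _
    have h5 : c₁ * ∫ y in Iic t, (u (x₂ - y))^2 ∂(g k)
        ≤ c₁ * (τ * ∫ y in Iic t, u (x₂ - y) ∂(g k)) :=
      mul_le_mul_of_nonneg_left h1 hc₁pos.le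
    calc c₁ * ∫ y in Iic t, (u (x₂ - y))^2 ∂(g k)
        ≤ c₁ * (τ * ∫ y in Iic t, u (x₂ - y) ∂(g k)) := h5
      _ = (c₁ * τ) * ∫ y in Iic t, u (x₂ - y) ∂(g k) := by ring
      _ = δ/4 * ∫ y in Iic t, u (x₂ - y) ∂(g k) := by rw [hτc₁]
  -- integral splitting
  have hsplit : ∀ (k : ℕ) (f : ℝ → ℝ), Integrable f (g k) →
      ∫ y in Iic r, f y ∂(g k) = (∫ y in Iic ρ, f y ∂(g k)) + ∫ y in Ioc ρ r, f y ∂(g k) := by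
    intro k f hf
    rw [← setIntegral_union (Iic_disjoint_Ioc le_rfl) measurableSet_Ioc
      hf.integrableOn hf.integrableOn, Iic_union_Ioc_eq_Iic hρler]
  by_cases hrM : r ≤ M
  · -- Branch 1 : cut at ρ.
    have hstrip : ∀ k ∈ K, ∀ y ∈ Ioc ρ r,
        (1+ε') * ((k:ℝ) * u (x₁ - y)) ≤ 1 - (1 - u (x₂ - y)) ^ k := by
      intro k hk y hy
      obtain ⟨hk1, hk2⟩ := hmem k hk
      have hy1 : u (x₁ - y) ≤ β := by
        have e1 : x₁ - y = x₂ - (y - M) := by rw [hx₂]; ring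
        rw [e1]
        have h2 : u (x₂ - (y - M)) ≤ u (x₂ - 0) := hmono2 (by linarith [hy.2])
        rw [sub_zero] at h2
        exact le_trans h2 hux₂
      have hy2 : τ < u (x₂ - y) := hstripτ y hy.1 hy.2
      have hy3 : u (x₂ - y) ≤ 1 - (1 - u (x₂ - y))^k := hQge k hk1 _ (hu0 _) (hu1 _)
      have hkk : (k:ℝ) ≤ (k₀:ℝ) := by exact_mod_cast hk2
      have hkpos : (0:ℝ) ≤ (k:ℝ) := by positivity
      have h5 : (1+ε') * ((k:ℝ) * u (x₁ - y)) ≤ 2 * ((k₀:ℝ) * β) := by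
        have h6 := hu0 (x₁ - y)
        have h7 : (k:ℝ) * u (x₁ - y) ≤ (k₀:ℝ) * β :=
          mul_le_mul hkk hy1 h6 (by positivity)
        nlinarith only [h7, hε'le, hε'nn, mul_nonneg hkpos h6]
      linarith only [h5, hN4, hy2, hy3]
    have H1ρ : ∑ k ∈ K, p k * ∫ y in Iic ρ, (1 - (1 - u (x₂ - y)) ^ k) ∂(g k)
        ≤ (1 + ε') * ∑ k ∈ K, p k * ∫ y in Iic ρ, (k : ℝ) * u (x₁ - y) ∂(g k) := by
      have e3 : ∀ k ∈ K, (1+ε') * (p k * ∫ y in Ioc ρ r, (k:ℝ) * u (x₁ - y) ∂(g k))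
          ≤ p k * ∫ y in Ioc ρ r, (1 - (1 - u (x₂ - y)) ^ k) ∂(g k) := by
        intro k hk
        have h6 : ∫ y in Ioc ρ r, (1+ε') * ((k:ℝ) * u (x₁ - y)) ∂(g k)
            ≤ ∫ y in Ioc ρ r, (1 - (1 - u (x₂ - y)) ^ k) ∂(g k) := by
          refine setIntegral_mono_on
            ((((hint1 k).const_mul _).const_mul _).integrableOn)
            ((hintQ k).integrableOn) measurableSet_Ioc ?_
          exact fun y hy => hstrip k hk y hy
        rw [integral_const_mul] at h6
        have h7 := hp k hk
        calc (1+ε') * (p k * ∫ y in Ioc ρ r, (k:ℝ) * u (x₁ - y) ∂(g k))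
            = p k * ((1+ε') * ∫ y in Ioc ρ r, (k:ℝ) * u (x₁ - y) ∂(g k)) := by ring
          _ ≤ p k * ∫ y in Ioc ρ r, (1 - (1 - u (x₂ - y)) ^ k) ∂(g k) :=
              mul_le_mul_of_nonneg_left h6 h7
      have hq1 : ∑ k ∈ K, p k * ∫ y in Iic ρ, (1 - (1 - u (x₂ - y)) ^ k) ∂(g k)
          = ∑ k ∈ K, p k * ∫ y in Iic r, (1 - (1 - u (x₂ - y)) ^ k) ∂(g k)
            - ∑ k ∈ K, p k * ∫ y in Ioc ρ r, (1 - (1 - u (x₂ - y)) ^ k) ∂(g k) := by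
        rw [← Finset.sum_sub_distrib]
        refine Finset.sum_congr rfl fun k hk => ?_
        rw [hsplit k _ (hintQ k)]
        ring
      have hq2 : ∑ k ∈ K, p k * ∫ y in Iic ρ, (k:ℝ) * u (x₁ - y) ∂(g k)
          = ∑ k ∈ K, p k * ∫ y in Iic r, (k:ℝ) * u (x₁ - y) ∂(g k)
            - ∑ k ∈ K, p k * ∫ y in Ioc ρ r, (k:ℝ) * u (x₁ - y) ∂(g k) := by
        rw [← Finset.sum_sub_distrib]
        refine Finset.sum_congr rfl fun k hk => ?_
        rw [hsplit k _ ((hint1 k).const_mul _)]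
        ring
      have hq3 : (1+ε') * ∑ k ∈ K, p k * ∫ y in Ioc ρ r, (k:ℝ) * u (x₁ - y) ∂(g k)
          ≤ ∑ k ∈ K, p k * ∫ y in Ioc ρ r, (1 - (1 - u (x₂ - y)) ^ k) ∂(g k) := by
        rw [Finset.mul_sum]
        exact Finset.sum_le_sum e3
      rw [hq1, hq2, mul_sub]
      linarith [htrunc]
    have H2ρ : ∀ k ∈ K, c₁ * ∫ y in Iic ρ, (u (x₂ - y))^2 ∂(g k)
        ≤ δ/2 * ∫ y in Iic ρ, u (x₂ - y) ∂(g k) := by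
      intro k hk
      have h1 := habs ρ hIicρ k
      have h4 : 0 ≤ ∫ y in Iic ρ, u (x₂ - y) ∂(g k) := integral_nonneg fun y => hu0 _
      linarith only [h1, mul_nonneg hδpos.le h4]
    obtain ⟨k, hk1, hk2, hfin⟩ := final ρ H1ρ H2ρ
    exact ⟨k, hk1, hk2, ρ, hρler,
      fun hMρ => absurd hMρ (not_lt.mpr (le_trans hρler hrM)), hfin⟩
  · -- Branch 2 : r > M, work at r itself.
    push_neg at hrM
    -- flatness up to r
    have hflatlt : ∀ y, M/2 ≤ y →
        (¬ (flatSet k₀ u x₁ x₂ M).Nonempty ∨ y < sInf (flatSet k₀ u x₁ x₂ M)) →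
        u (x₂ - y) ≤ (4*(k₀:ℝ))^2 * u (x₁ - y) := by
      intro y hy hc
      by_contra h
      push_neg at h
      have hymem : y ∈ flatSet k₀ u x₁ x₂ M := ⟨hy, h⟩
      rcases hc with hc | hc
      · exact hc ⟨y, hymem⟩
      · have h2 : sInf (flatSet k₀ u x₁ x₂ M) ≤ y :=
          csInf_le ⟨M/2, fun z hz => hz.1⟩ hymem
        linarith
    have hrq : (flatSet k₀ u x₁ x₂ M).Nonempty → r ≤ sInf (flatSet k₀ u x₁ x₂ M) := by
      intro hΦ
      obtain ⟨hc1, hc2⟩ := hrne hΦ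
      by_cases hcond : 4 * (k₀ : ℝ) * u (x₁ - (sInf (flatSet k₀ u x₁ x₂ M) + M / 2))
          ≤ Function.leftLim u (x₂ - sInf (flatSet k₀ u x₁ x₂ M))
      · rw [hc1 hcond]; exact min_le_right _ _
      · rw [hc2 hcond]
        have := min_le_right y₀ (sInf (flatSet k₀ u x₁ x₂ M) - M / 2)
        linarith
    have hflat : ∀ y, M/2 ≤ y → y ≤ r → u (x₂ - y) ≤ (4*(k₀:ℝ))^2 * u (x₁ - y) := by
      intro y hy1 hy2
      by_cases hΦ : (flatSet k₀ u x₁ x₂ M).Nonempty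
      · have hq := hrq hΦ
        rcases lt_or_eq_of_le (le_trans hy2 hq) with hlt | heq
        · exact hflatlt y hy1 (Or.inr hlt)
        · -- y = sInf Φ, and y ≥ r > M
          have hyM : M < y := by rw [heq]; exact lt_of_lt_of_le hrM hq
          have hseq : ∀ n : ℕ, u (x₂ - (y - (y - M/2)/((n:ℝ)+1)))
              ≤ (4*(k₀:ℝ))^2 * u (x₁ - (y - (y - M/2)/((n:ℝ)+1))) := by
            intro n
            have hn1 : (0:ℝ) < (n:ℝ)+1 := by positivity
            have h7 : 0 < (y - M/2)/((n:ℝ)+1) := by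
              apply div_pos (by linarith) hn1
            have h8 : (y - M/2)/((n:ℝ)+1) ≤ y - M/2 := by
              rw [div_le_iff₀ hn1]
              have h9 : 0 ≤ (y - M/2) * (n:ℝ) :=
                mul_nonneg (by linarith only [hyM, hMpos]) (Nat.cast_nonneg n)
              linarith only [h9]
            refine hflatlt _ (by linarith) (Or.inr ?_)
            rw [← heq]
            linarith
          have htend0 : Tendsto (fun n : ℕ => (y - M/2)/((n:ℝ)+1)) atTop (𝓝 0) := by
            have h9 : Tendsto (fun n : ℕ => (y - M/2) * (1/((n:ℝ)+1))) atTop (𝓝 ((y - M/2) * 0)) :=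
              tendsto_const_nhds.mul tendsto_one_div_add_atTop_nhds_zero_nat
            simp only [mul_zero] at h9
            convert h9 using 2 with n
            ring
          have hlim2 : Tendsto (fun n : ℕ => u (x₂ - (y - (y - M/2)/((n:ℝ)+1)))) atTop
              (𝓝 (u (x₂ - y))) := by
            refine ((hurc (x₂ - y)).tendsto).comp ?_
            rw [tendsto_nhdsWithin_iff]
            constructor
            · have : Tendsto (fun n : ℕ => (x₂ - y) + (y - M/2)/((n:ℝ)+1)) atTop
                  (𝓝 ((x₂ - y) + 0)) := tendsto_const_nhds.add htend0
              simp only [add_zero] at this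
              convert this using 2 with n
              ring
            · filter_upwards with n
              have hn1 : (0:ℝ) < (n:ℝ)+1 := by positivity
              have h7 : 0 ≤ (y - M/2)/((n:ℝ)+1) := le_of_lt (div_pos (by linarith) hn1)
              simp only [mem_Ici]
              linarith
          have hlim1 : Tendsto (fun n : ℕ => u (x₁ - (y - (y - M/2)/((n:ℝ)+1)))) atTop
              (𝓝 (u (x₁ - y))) := by
            refine ((hurc (x₁ - y)).tendsto).comp ?_
            rw [tendsto_nhdsWithin_iff]
            constructor
            · have : Tendsto (fun n : ℕ => (x₁ - y) + (y - M/2)/((n:ℝ)+1)) atTop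
                  (𝓝 ((x₁ - y) + 0)) := tendsto_const_nhds.add htend0
              simp only [add_zero] at this
              convert this using 2 with n
              ring
            · filter_upwards with n
              have hn1 : (0:ℝ) < (n:ℝ)+1 := by positivity
              have h7 : 0 ≤ (y - M/2)/((n:ℝ)+1) := le_of_lt (div_pos (by linarith) hn1)
              simp only [mem_Ici]
              linarith
          exact le_of_tendsto_of_tendsto' hlim2 (tendsto_const_nhds.mul hlim1) hseq
      · exact hflatlt y hy1 (Or.inl hΦ)
    -- the iterated smallness bound
    have hIT : ∀ n : ℕ, ∀ y : ℝ, y ≤ r → y ≤ M/2 + (n:ℝ)*M →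
        u (x₂ - y) ≤ (4*(k₀:ℝ))^(2*n+2) * β := by
      intro n
      induction n with
      | zero =>
        intro y hy1 hy2
        simp only [Nat.cast_zero, zero_mul, add_zero] at hy2
        have h1 : u (x₂ - y) ≤ u (x₂ - (M/2)) := hmono2 hy2
        have h2 : u (x₂ - (M/2)) ≤ (4*(k₀:ℝ))^2 * u (x₁ - (M/2)) :=
          hflat (M/2) le_rfl (by linarith)
        have h3 : u (x₁ - (M/2)) ≤ β := by
          have e1 : x₁ - (M/2) = x₂ - (M/2 - M) := by rw [hx₂]; ring
          rw [e1]
          have h4 : u (x₂ - (M/2 - M)) ≤ u (x₂ - 0) := hmono2 (by linarith)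
          rw [sub_zero] at h4
          exact le_trans h4 hux₂
        have h5 : (4*(k₀:ℝ))^2 * u (x₁ - (M/2)) ≤ (4*(k₀:ℝ))^2 * β :=
          mul_le_mul_of_nonneg_left h3 (by positivity)
        calc u (x₂ - y) ≤ u (x₂ - (M/2)) := h1
          _ ≤ (4*(k₀:ℝ))^2 * u (x₁ - (M/2)) := h2
          _ ≤ (4*(k₀:ℝ))^2 * β := h5
          _ = (4*(k₀:ℝ))^(2*0+2) * β := by norm_num
      | succ n ih =>
        intro y hy1 hy2
        by_cases hy3 : y ≤ M/2 + (n:ℝ)*M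
        · have h1 := ih y hy1 hy3
          have h2 : (4*(k₀:ℝ))^(2*n+2) ≤ (4*(k₀:ℝ))^(2*(n+1)+2) :=
            pow_le_pow_right₀ h4k₀1 (by omega)
          linarith only [h1, mul_le_mul_of_nonneg_right h2 hβpos.le]
        · push_neg at hy3
          have hn0 : (0:ℝ) ≤ (n:ℝ) := Nat.cast_nonneg n
          have hyM2 : M/2 ≤ y := by
            have h9 : 0 ≤ (n:ℝ) * M := mul_nonneg hn0 hMpos.le
            linarith only [h9, hy3]
          have h5 := hflat y hyM2 hy1
          have e1 : x₁ - y = x₂ - (y - M) := by rw [hx₂]; ring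
          rw [e1] at h5
          have h6 : y - M ≤ M/2 + (n:ℝ)*M := by
            push_cast at hy2
            linarith
          have h7 := ih (y - M) (by linarith) h6
          have h8 : (4*(k₀:ℝ))^2 * u (x₂ - (y - M))
              ≤ (4*(k₀:ℝ))^2 * ((4*(k₀:ℝ))^(2*n+2) * β) :=
            mul_le_mul_of_nonneg_left h7 (by positivity)
          have h9 : (4*(k₀:ℝ))^2 * ((4*(k₀:ℝ))^(2*n+2) * β)
              = (4*(k₀:ℝ))^(2*(n+1)+2) * β := by
            rw [← mul_assoc, ← pow_add]
            ring_nf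
          calc u (x₂ - y) ≤ (4*(k₀:ℝ))^2 * u (x₂ - (y - M)) := h5
            _ ≤ (4*(k₀:ℝ))^2 * ((4*(k₀:ℝ))^(2*n+2) * β) := h8
            _ = (4*(k₀:ℝ))^(2*(n+1)+2) * β := h9
    -- the step count j
    set Dc : ℝ := 64 * c₁^2 / δ^2 with hDc
    have hDcpos : 0 < Dc := by rw [hDc]; positivity
    have hDc1 : 1 < Dc := by
      rw [hDc, lt_div_iff₀ (by positivity)]
      have h1 : δ^2 < 1 := by nlinarith only [hδpos, hδlt1]
      have h2 : (1:ℝ) ≤ c₁^2 := by nlinarith only [hc₁, hc₁pos]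
      linarith only [h1, h2]
    have hlogDc : 0 < Real.log Dc := Real.log_pos hDc1
    set xx : ℝ := 4 / (3*(a*M)) * Real.log Dc with hxx
    have hxxpos : 0 < xx := by
      rw [hxx]
      positivity
    set j : ℕ := ⌈xx⌉₊ with hj
    have hj1 : 1 ≤ j := Nat.one_le_ceil_iff.mpr hxxpos
    have hjx : xx ≤ (j:ℝ) := Nat.le_ceil xx
    have hjx1 : (j:ℝ) ≤ xx + 1 := by
      have := Nat.ceil_lt_add_one hxxpos.le
      linarith
    have hj1R : (1:ℝ) ≤ (j:ℝ) := by exact_mod_cast hj1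
    have hjM : M ≤ (j:ℝ)*M := by
      have h1 := mul_le_mul_of_nonneg_right hj1R hMpos.le
      linarith only [h1]
    have hbase : (4*(k₀:ℝ))^2 ≤ Real.exp (a*M/4) := by
      have h1 : (2:ℝ) * Real.log (4*(k₀:ℝ)) ≤ a*M/4 := by linarith
      have h2 : (4*(k₀:ℝ))^2 = Real.exp (2*Real.log (4*(k₀:ℝ))) := by
        rw [two_mul, Real.exp_add, Real.exp_log h4k₀pos]
        ring
      rw [h2]
      exact Real.exp_le_exp.mpr h1
    -- (4k₀)^{2j} ≤ W (4k₀)^2 where W³δ³ ≤ (4c₁)³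
    obtain ⟨W, hWnn, hW3, hWbd⟩ : ∃ W : ℝ, 0 ≤ W ∧ W^(3:ℕ) = Dc ∧
        (4*(k₀:ℝ))^(2*j) ≤ W * (4*(k₀:ℝ))^2 := by
      refine ⟨Dc ^ ((1:ℝ)/3), Real.rpow_nonneg hDcpos.le _, ?_, ?_⟩
      · rw [← Real.rpow_natCast (Dc ^ ((1:ℝ)/3)) 3, ← Real.rpow_mul hDcpos.le]
        norm_num
      · have h1 : (4*(k₀:ℝ))^(2*j) = ((4*(k₀:ℝ))^2)^(j:ℕ) := by
          rw [← pow_mul]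
        have h2 : (((4*(k₀:ℝ))^2 : ℝ))^(j:ℕ) = (((4*(k₀:ℝ))^2 : ℝ))^((j:ℝ)) :=
          (Real.rpow_natCast _ j).symm
        have h3 : (((4*(k₀:ℝ))^2 : ℝ))^((j:ℝ)) ≤ (((4*(k₀:ℝ))^2 : ℝ))^(xx+1 : ℝ) :=
          Real.rpow_le_rpow_of_exponent_le (one_le_pow₀ h4k₀1) hjx1
        have h4 : (((4*(k₀:ℝ))^2 : ℝ))^(xx+1 : ℝ)
            = (((4*(k₀:ℝ))^2 : ℝ))^(xx:ℝ) * (4*(k₀:ℝ))^2 := by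
          rw [Real.rpow_add (by positivity), Real.rpow_one]
        have h5 : (((4*(k₀:ℝ))^2 : ℝ))^(xx:ℝ) ≤ Dc ^ ((1:ℝ)/3) := by
          rw [Real.rpow_def_of_pos (by positivity), Real.rpow_def_of_pos hDcpos]
          apply Real.exp_le_exp.mpr
          have h6 : Real.log ((4*(k₀:ℝ))^2) ≤ a*M/4 := by
            rw [Real.log_pow]
            push_cast
            linarith
          have h7 : Real.log ((4*(k₀:ℝ))^2) * xx ≤ (a*M/4) * xx :=
            mul_le_mul_of_nonneg_right h6 hxxpos.le
          have h8 : (a*M/4) * xx = Real.log Dc * ((1:ℝ)/3) := by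
            rw [hxx]
            field_simp
          linarith
        calc (4*(k₀:ℝ))^(2*j) = (((4*(k₀:ℝ))^2 : ℝ))^((j:ℝ)) := by rw [h1, h2]
          _ ≤ (((4*(k₀:ℝ))^2 : ℝ))^(xx+1 : ℝ) := h3
          _ = (((4*(k₀:ℝ))^2 : ℝ))^(xx:ℝ) * (4*(k₀:ℝ))^2 := h4
          _ ≤ Dc ^ ((1:ℝ)/3) * (4*(k₀:ℝ))^2 :=
              mul_le_mul_of_nonneg_right h5 (by positivity)
    have hWδ : W * δ ≤ 4 * c₁ := by
      refine le_of_pow_le_pow_left₀ (three_ne_zero) (by positivity) ?_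
      have h1 : (W*δ)^(3:ℕ) = Dc * δ^3 := by
        rw [mul_pow, hW3]
      rw [h1, hDc]
      have h2 : 64 * c₁^2 / δ^2 * δ^3 = 64 * c₁^2 * δ := by
        field_simp
      rw [h2]
      have h3 : 0 ≤ c₁ * c₁ * (c₁ - δ) :=
        mul_nonneg (mul_nonneg hc₁pos.le hc₁pos.le) (by linarith only [hδc])
      nlinarith only [h3]
    -- the main smallness fact : (4k₀)^{2j+2} β ≤ τ
    have hτβj : (4*(k₀:ℝ))^(2*j+2) * β ≤ τ := by
      have h1 : (4*(k₀:ℝ))^(2*j+2) = (4*(k₀:ℝ))^(2*j) * (4*(k₀:ℝ))^2 := by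
        rw [← pow_add]
      have h2 : (4*(k₀:ℝ))^(2*j+2) ≤ W * (4*(k₀:ℝ))^4 := by
        rw [h1]
        calc (4*(k₀:ℝ))^(2*j) * (4*(k₀:ℝ))^2 ≤ (W * (4*(k₀:ℝ))^2) * (4*(k₀:ℝ))^2 :=
            mul_le_mul_of_nonneg_right hWbd (by positivity)
          _ = W * (4*(k₀:ℝ))^4 := by ring
      have h3 : W * (4*(k₀:ℝ))^4 * β ≤ τ := by
        -- equivalent to 2048 W k₀^4 c₁ f₀ ≤ δ (1-ε₀), which follows from hN1' and hWδ
        have h4 : 2048 * W * (k₀:ℝ)^4 * c₁ * f₀ * δ ≤ δ^2 * (1-ε₀) := by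
          have h5 : 2048 * W * (k₀:ℝ)^4 * c₁ * f₀ * δ
              = 2048 * (W * δ) * ((k₀:ℝ)^4 * c₁ * f₀) := by ring
          have h6 : 2048 * (W * δ) * ((k₀:ℝ)^4 * c₁ * f₀)
              ≤ 2048 * (4*c₁) * ((k₀:ℝ)^4 * c₁ * f₀) := by
            have h7 : (0:ℝ) ≤ (k₀:ℝ)^4 * c₁ * f₀ := by positivity
            linarith only [mul_le_mul_of_nonneg_right hWδ h7]
          have h8 : 2048 * (4*c₁) * ((k₀:ℝ)^4 * c₁ * f₀) = 8192 * (k₀:ℝ)^4 * c₁^2 * f₀ := by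
            ring
          calc 2048 * W * (k₀:ℝ)^4 * c₁ * f₀ * δ
              = 2048 * (W * δ) * ((k₀:ℝ)^4 * c₁ * f₀) := h5
            _ ≤ 2048 * (4*c₁) * ((k₀:ℝ)^4 * c₁ * f₀) := h6
            _ = 8192 * (k₀:ℝ)^4 * c₁^2 * f₀ := h8
            _ ≤ δ^2 * (1-ε₀) := hN1'
        have h10 : 2048 * W * (k₀:ℝ)^4 * c₁ * f₀ ≤ δ * (1-ε₀) := by
          have := (mul_le_mul_iff_of_pos_right hδpos).mp (by linarith only [h4] :
            (2048 * W * (k₀:ℝ)^4 * c₁ * f₀) * δ ≤ (δ * (1-ε₀)) * δ)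
          linarith only [this]
        rw [hβdef, hτdef]
        rw [show W * (4*(k₀:ℝ))^4 * (2*f₀/(1-ε₀)) = (512 * W * (k₀:ℝ)^4 * f₀)/(1-ε₀) by
          field_simp; ring]
        rw [div_le_div_iff₀ h1ε₀ (by positivity)]
        linarith only [h10]
      calc (4*(k₀:ℝ))^(2*j+2) * β ≤ (W * (4*(k₀:ℝ))^4) * β :=
          mul_le_mul_of_nonneg_right h2 hβpos.le
        _ ≤ τ := h3
    -- decay gain over j steps
    have hdecayβ : Real.exp (-(a*((j:ℝ)*M))) * (4*(k₀:ℝ))^(2*j) ≤ δ^2/(64*c₁^2) := by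
      have hA1 : (4*(k₀:ℝ))^(2*j) ≤ Real.exp ((j:ℝ)*(a*M/4)) := by
        have h1 : ((4*(k₀:ℝ))^2)^(j:ℕ) ≤ (Real.exp (a*M/4))^(j:ℕ) :=
          pow_le_pow_left₀ (by positivity) hbase j
        rw [← Real.exp_nat_mul] at h1
        have h2 : (4*(k₀:ℝ))^(2*j) = ((4*(k₀:ℝ))^2)^(j:ℕ) := by
          rw [← pow_mul]
        rw [h2]
        exact h1
      have hA2 : Real.exp (-(a*((j:ℝ)*M))) * (4*(k₀:ℝ))^(2*j)
          ≤ Real.exp (-(a*((j:ℝ)*M)) + (j:ℝ)*(a*M/4)) := by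
        rw [Real.exp_add]
        exact mul_le_mul_of_nonneg_left hA1 (Real.exp_pos _).le
      have hA3 : -(a*((j:ℝ)*M)) + (j:ℝ)*(a*M/4) = -(3/4) * ((j:ℝ)*(a*M)) := by ring
      have hA4 : -(3/4) * ((j:ℝ)*(a*M)) ≤ -(3/4) * (xx*(a*M)) := by
        have h1 := mul_le_mul_of_nonneg_right hjx haMpos.le
        linarith only [h1]
      have hA5 : -(3/4) * (xx*(a*M)) = -Real.log Dc := by
        rw [hxx]
        field_simp
      have hA6 : Real.exp (-Real.log Dc) = δ^2/(64*c₁^2) := by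
        rw [Real.exp_neg, Real.exp_log hDcpos, hDc, inv_div]
      calc Real.exp (-(a*((j:ℝ)*M))) * (4*(k₀:ℝ))^(2*j)
          ≤ Real.exp (-(a*((j:ℝ)*M)) + (j:ℝ)*(a*M/4)) := hA2
        _ = Real.exp (-(3/4) * ((j:ℝ)*(a*M))) := by rw [hA3]
        _ ≤ Real.exp (-(3/4) * (xx*(a*M))) := Real.exp_le_exp.mpr hA4
        _ = Real.exp (-Real.log Dc) := by rw [hA5]
        _ = δ^2/(64*c₁^2) := hA6
    -- H2 at r
    have H2r : ∀ k ∈ K, c₁ * ∫ y in Iic r, (u (x₂ - y))^2 ∂(g k)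
        ≤ δ/2 * ∫ y in Iic r, u (x₂ - y) ∂(g k) := by
      intro k hk
      obtain ⟨hk1, hk2⟩ := hmem k hk
      haveI := hg k
      have hΘnn : 0 ≤ ∫ y in Iic r, u (x₂ - y) ∂(g k) := integral_nonneg fun y => hu0 _
      rcases eq_or_lt_of_le hρler with hρr | hρr
      · -- ρ = r : pure absorption
        have h1 := habs r (by rw [← hρr]; exact hIicρ) k
        linarith only [h1, mul_nonneg hδpos.le hΘnn]
      · -- ρ < r
        set θ := min (min (M/8) (Real.log 2 / a)) ((r - ρ)/2) with hθd
        have hl2 : (0:ℝ) < Real.log 2 := Real.log_pos (by norm_num)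
        have hθpos : 0 < θ := by
          refine lt_min (lt_min (by positivity) (by positivity)) (by linarith)
        have hθM8 : θ ≤ M/8 := le_trans (min_le_left _ _) (min_le_left _ _)
        have hθa : a * θ ≤ Real.log 2 := by
          have h1 : θ ≤ Real.log 2 / a := le_trans (min_le_left _ _) (min_le_right _ _)
          rw [le_div_iff₀ ha] at h1
          linarith [h1]
        have hθρ : ρ + θ ≤ r := by
          have h1 : θ ≤ (r - ρ)/2 := min_le_right _ _
          linarith
        have hσ'τ : τ < u (x₂ - (ρ + θ)) := hstripτ (ρ + θ) (by linarith) hθρ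
        have hσ'jM : (j:ℝ)*M ≤ ρ + θ := by
          by_contra hcon
          push_neg at hcon
          have h1 := hIT j (ρ + θ) hθρ (by linarith only [hcon, hMpos])
          linarith only [h1, hτβj, hσ'τ]
        set z := ρ + θ - (j:ℝ)*M with hz
        have hz0 : 0 ≤ z := by rw [hz]; linarith
        -- the chain
        have hchain : ∀ i : ℕ, i ≤ j →
            u (x₂ - (ρ + θ)) ≤ (4*(k₀:ℝ))^(2*i) * u (x₂ - (ρ + θ - (i:ℝ)*M)) := by
          intro i hi
          induction i with
          | zero =>
            simp
          | succ i ih =>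
            have hij : i ≤ j := Nat.le_of_succ_le hi
            have h1 := ih hij
            have hi1R : ((i:ℝ)+1) ≤ (j:ℝ) := by exact_mod_cast hi
            have hiM : M/2 ≤ ρ + θ - (i:ℝ)*M := by
              have h9 := mul_le_mul_of_nonneg_right hi1R hMpos.le
              linarith only [h9, hσ'jM, hMpos]
            have h2 := hflat (ρ + θ - (i:ℝ)*M) hiM
              (by
                have h9 : 0 ≤ (i:ℝ)*M := mul_nonneg (Nat.cast_nonneg i) hMpos.le
                linarith only [h9, hθρ] : ρ + θ - (i:ℝ)*M ≤ r)
            have e1 : x₁ - (ρ + θ - (i:ℝ)*M) = x₂ - (ρ + θ - ((i:ℕ)+1:ℝ)*M) := by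
              rw [hx₂]
              push_cast
              ring
            rw [e1] at h2
            have h3 : (4*(k₀:ℝ))^(2*i) * u (x₂ - (ρ + θ - (i:ℝ)*M))
                ≤ (4*(k₀:ℝ))^(2*i) * ((4*(k₀:ℝ))^2 * u (x₂ - (ρ + θ - ((i:ℕ)+1:ℝ)*M))) :=
              mul_le_mul_of_nonneg_left h2 (by positivity)
            have h4 : (4*(k₀:ℝ))^(2*i) * ((4*(k₀:ℝ))^2 * u (x₂ - (ρ + θ - ((i:ℕ)+1:ℝ)*M)))
                = (4*(k₀:ℝ))^(2*(i+1)) * u (x₂ - (ρ + θ - ((i:ℕ)+1:ℝ)*M)) := by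
              rw [← mul_assoc, ← pow_add]
              ring_nf
            calc u (x₂ - (ρ + θ)) ≤ (4*(k₀:ℝ))^(2*i) * u (x₂ - (ρ + θ - (i:ℝ)*M)) := h1
              _ ≤ (4*(k₀:ℝ))^(2*(i+1)) * u (x₂ - (ρ + θ - ((i:ℕ)+1:ℝ)*M)) := by
                  rw [← h4]; exact h3
              _ = (4*(k₀:ℝ))^(2*(i+1)) * u (x₂ - (ρ + θ - ((i+1:ℕ):ℝ)*M)) := by
                  push_cast
                  ring_nf
        have hzchain : τ ≤ (4*(k₀:ℝ))^(2*j) * u (x₂ - z) := by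
          have h1 := hchain j le_rfl
          rw [hz]
          linarith
        have huz : 0 ≤ u (x₂ - z) := hu0 _
        -- measure estimates
        have hfinm : ∀ s : Set ℝ, (g k) s ≠ ⊤ := fun s => measure_ne_top (g k) s
        have md1 : ((g k) (Ioi ρ)).toReal
            ≤ Real.exp (-a*((j:ℝ)*M - θ)) * ((g k) (Ioi z)).toReal := by
          have h1 := hgdecay k hk1 hk2 ((j:ℝ)*M - θ) z
            (by linarith only [hcondi.1, hjM, hθM8, hθpos] : M₀ < (j:ℝ)*M - θ) hz0
          have e2 : z + ((j:ℝ)*M - θ) = ρ := by rw [hz]; ring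
          rw [e2] at h1
          exact h1
        have md2 : ((g k) (Ici ρ)).toReal
            ≤ Real.exp (-a*((j:ℝ)*M - 2*θ)) * ((g k) (Ioi z)).toReal := by
          have h1 := hgdecay k hk1 hk2 ((j:ℝ)*M - 2*θ) z
            (by linarith only [hcondi.1, hjM, hθM8, hθpos] : M₀ < (j:ℝ)*M - 2*θ) hz0
          have e3 : z + ((j:ℝ)*M - 2*θ) = ρ - θ := by rw [hz]; ring
          rw [e3] at h1
          refine le_trans ?_ h1
          refine ENNReal.toReal_mono (hfinm _) (measure_mono ?_)
          intro w hw
          simp only [mem_Ici] at hw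
          simp only [mem_Ioi]
          linarith
        have md2' : ((g k) (Ici ρ)).toReal ≤ 1/2 * ((g k) (Ioi z)).toReal := by
          have h1 : Real.exp (-a*((j:ℝ)*M - 2*θ)) ≤ 1/2 := by
            have h2 : -a*((j:ℝ)*M - 2*θ) ≤ -a*M/2 := by
              have h9 := mul_le_mul_of_nonneg_left
                (by linarith only [hjM, hθM8, hMpos] : M/2 ≤ (j:ℝ)*M - 2*θ) ha.le
              linarith only [h9]
            calc Real.exp (-a*((j:ℝ)*M - 2*θ)) ≤ Real.exp (-a*M/2) :=
                Real.exp_le_exp.mpr h2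
              _ ≤ 1/100 := hexpaM2
              _ ≤ 1/2 := by norm_num
          linarith only [md2, mul_le_mul_of_nonneg_right h1
            (ENNReal.toReal_nonneg (a := (g k) (Ioi z)))]
        have md3 : ((g k) (Ioi z)).toReal
            ≤ ((g k) (Ico z ρ)).toReal + ((g k) (Ici ρ)).toReal := by
          have hsub : Ioi z ⊆ Ico z ρ ∪ Ici ρ := by
            intro w hw
            simp only [mem_Ioi] at hw
            by_cases hwρ : w < ρ
            · exact Or.inl ⟨le_of_lt hw, hwρ⟩
            · exact Or.inr (le_of_not_gt hwρ)
          calc ((g k) (Ioi z)).toReal ≤ ((g k) (Ico z ρ ∪ Ici ρ)).toReal :=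
              ENNReal.toReal_mono (hfinm _) (measure_mono hsub)
            _ ≤ (((g k) (Ico z ρ)) + (g k) (Ici ρ)).toReal :=
              ENNReal.toReal_mono (ENNReal.add_ne_top.mpr ⟨hfinm _, hfinm _⟩)
                (measure_union_le _ _)
            _ = ((g k) (Ico z ρ)).toReal + ((g k) (Ici ρ)).toReal :=
              ENNReal.toReal_add (hfinm _) (hfinm _)
        have md4 : ((g k) (Ioi z)).toReal ≤ 2 * ((g k) (Ico z ρ)).toReal := by
          linarith
        -- mass capture
        have md5 : u (x₂ - z) * ((g k) (Ico z ρ)).toReal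
            ≤ ∫ y in Iic r, u (x₂ - y) ∂(g k) := by
          have h1 : ∫ y in Ico z ρ, u (x₂ - z) ∂(g k) ≤ ∫ y in Ico z ρ, u (x₂ - y) ∂(g k) := by
            refine setIntegral_mono_on ((integrable_const _).integrableOn)
              ((hint2 k).integrableOn) measurableSet_Ico ?_
            intro y hy
            exact hmono2 hy.1
          have h2 : ∫ y in Ico z ρ, u (x₂ - y) ∂(g k) ≤ ∫ y in Iic r, u (x₂ - y) ∂(g k) := by
            refine setIntegral_mono_set ((hint2 k).integrableOn)
              (ae_of_all _ fun y => hu0 _) (HasSubset.Subset.eventuallyLE ?_)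
            intro w hw
            simp only [mem_Iic]
            have := hw.2
            linarith
          rw [setIntegral_const, smul_eq_mul, mul_comm] at h1
          exact le_trans h1 h2
        -- combine : c₁ * ν(Ioc ρ r) ≤ δ/4 * Θ
        have mtop : c₁ * ((g k) (Ioc ρ r)).toReal
            ≤ δ/4 * ∫ y in Iic r, u (x₂ - y) ∂(g k) := by
          set Θ := ∫ y in Iic r, u (x₂ - y) ∂(g k) with hΘdef
          set G0 := ((g k) (Ioi z)).toReal with hG0
          set GI := ((g k) (Ico z ρ)).toReal with hGI
          have hG0nn : 0 ≤ G0 := ENNReal.toReal_nonneg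
          have hGInn : 0 ≤ GI := ENNReal.toReal_nonneg
          have h0 : ((g k) (Ioc ρ r)).toReal ≤ ((g k) (Ioi ρ)).toReal :=
            ENNReal.toReal_mono (hfinm _) (measure_mono Ioc_subset_Ioi_self)
          have hE1 : Real.exp (-a*((j:ℝ)*M - θ)) ≤ 2 * Real.exp (-(a*((j:ℝ)*M))) := by
            rw [show -a*((j:ℝ)*M - θ) = a*θ + -(a*((j:ℝ)*M)) by ring, Real.exp_add]
            have h1 : Real.exp (a*θ) ≤ 2 := by
              calc Real.exp (a*θ) ≤ Real.exp (Real.log 2) := Real.exp_le_exp.mpr hθa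
                _ = 2 := Real.exp_log (by norm_num)
            linarith only [mul_le_mul_of_nonneg_right h1 (Real.exp_pos (-(a*((j:ℝ)*M)))).le]
          have h2 : ((g k) (Ioi ρ)).toReal ≤ 2 * Real.exp (-(a*((j:ℝ)*M))) * G0 := by
            calc ((g k) (Ioi ρ)).toReal ≤ Real.exp (-a*((j:ℝ)*M - θ)) * G0 := md1
              _ ≤ 2 * Real.exp (-(a*((j:ℝ)*M))) * G0 :=
                mul_le_mul_of_nonneg_right hE1 hG0nn
          have h3 : ((g k) (Ioi ρ)).toReal ≤ 4 * Real.exp (-(a*((j:ℝ)*M))) * GI := by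
            calc ((g k) (Ioi ρ)).toReal ≤ 2 * Real.exp (-(a*((j:ℝ)*M))) * G0 := h2
              _ ≤ 2 * Real.exp (-(a*((j:ℝ)*M))) * (2 * GI) := by
                  have h9 := mul_le_mul_of_nonneg_left md4
                    (by positivity : (0:ℝ) ≤ 2 * Real.exp (-(a*((j:ℝ)*M))))
                  linarith only [h9]
              _ = 4 * Real.exp (-(a*((j:ℝ)*M))) * GI := by ring
          -- τ * GI ≤ (4k₀)^{2j} * Θ
          have hK2 : τ * GI ≤ (4*(k₀:ℝ))^(2*j) * Θ := by
            calc τ * GI ≤ ((4*(k₀:ℝ))^(2*j) * u (x₂ - z)) * GI :=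
                mul_le_mul_of_nonneg_right hzchain hGInn
              _ = (4*(k₀:ℝ))^(2*j) * (u (x₂ - z) * GI) := by ring
              _ ≤ (4*(k₀:ℝ))^(2*j) * Θ := by
                  refine mul_le_mul_of_nonneg_left md5 (by positivity)
          have hGI_le : GI ≤ (4*(k₀:ℝ))^(2*j) * Θ / τ := by
            rw [le_div_iff₀ hτpos]
            linarith only [hK2]
          have hfinal : c₁ * (4 * Real.exp (-(a*((j:ℝ)*M))) * ((4*(k₀:ℝ))^(2*j) * Θ / τ))
              ≤ δ/4 * Θ := by
            have hΘnn' : 0 ≤ Θ := hΘnn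
            have hexpnn := (Real.exp_pos (-(a*((j:ℝ)*M)))).le
            have h5 : Real.exp (-(a*((j:ℝ)*M))) * (4*(k₀:ℝ))^(2*j) ≤ δ^2/(64*c₁^2) :=
              hdecayβ
            have h6 : c₁ * (4 * Real.exp (-(a*((j:ℝ)*M))) * ((4*(k₀:ℝ))^(2*j) * Θ / τ))
                = (4 * c₁ / τ) * (Real.exp (-(a*((j:ℝ)*M))) * (4*(k₀:ℝ))^(2*j)) * Θ := by
              field_simp
            have h7 : (4 * c₁ / τ) * (δ^2/(64*c₁^2)) = δ/4 := by
              rw [hτdef]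
              field_simp
              ring
            rw [h6]
            have h8 : (4 * c₁ / τ) * (Real.exp (-(a*((j:ℝ)*M))) * (4*(k₀:ℝ))^(2*j))
                ≤ (4 * c₁ / τ) * (δ^2/(64*c₁^2)) :=
              mul_le_mul_of_nonneg_left h5 (by positivity)
            rw [h7] at h8
            exact mul_le_mul_of_nonneg_right h8 hΘnn'
          have hmono3 : Real.exp (-(a*((j:ℝ)*M))) * GI
              ≤ Real.exp (-(a*((j:ℝ)*M))) * ((4*(k₀:ℝ))^(2*j) * Θ / τ) :=
            mul_le_mul_of_nonneg_left hGI_le (Real.exp_pos _).le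
          calc c₁ * ((g k) (Ioc ρ r)).toReal ≤ c₁ * ((g k) (Ioi ρ)).toReal :=
              mul_le_mul_of_nonneg_left h0 hc₁pos.le
            _ ≤ c₁ * (4 * Real.exp (-(a*((j:ℝ)*M))) * GI) :=
              mul_le_mul_of_nonneg_left h3 hc₁pos.le
            _ ≤ c₁ * (4 * Real.exp (-(a*((j:ℝ)*M))) * ((4*(k₀:ℝ))^(2*j) * Θ / τ)) := by
              have h9 := mul_le_mul_of_nonneg_left hmono3
                (by positivity : (0:ℝ) ≤ 4 * c₁)
              linarith only [h9]
            _ ≤ δ/4 * Θ := hfinal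
        -- split the square integral
        have hsq : ∫ y in Iic r, (u (x₂ - y))^2 ∂(g k)
            = (∫ y in Iic ρ, (u (x₂ - y))^2 ∂(g k)) + ∫ y in Ioc ρ r, (u (x₂ - y))^2 ∂(g k) :=
          hsplit k _ (hint2sq k)
        have hpart1 : c₁ * ∫ y in Iic ρ, (u (x₂ - y))^2 ∂(g k)
            ≤ δ/4 * ∫ y in Iic r, u (x₂ - y) ∂(g k) := by
          have h1 := habs ρ hIicρ k
          have h2 : ∫ y in Iic ρ, u (x₂ - y) ∂(g k) ≤ ∫ y in Iic r, u (x₂ - y) ∂(g k) := by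
            refine setIntegral_mono_set ((hint2 k).integrableOn)
              (ae_of_all _ fun y => hu0 _) (HasSubset.Subset.eventuallyLE ?_)
            exact Iic_subset_Iic.mpr hρler
          have h9 := mul_le_mul_of_nonneg_left h2 (by positivity : (0:ℝ) ≤ δ/4)
          linarith only [h1, h9]
        have hpart2 : c₁ * ∫ y in Ioc ρ r, (u (x₂ - y))^2 ∂(g k)
            ≤ δ/4 * ∫ y in Iic r, u (x₂ - y) ∂(g k) := by
          have h1 : ∫ y in Ioc ρ r, (u (x₂ - y))^2 ∂(g k) ≤ ((g k) (Ioc ρ r)).toReal := by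
            have h2 : ∫ y in Ioc ρ r, (u (x₂ - y))^2 ∂(g k) ≤ ∫ _y in Ioc ρ r, (1:ℝ) ∂(g k) :=
              setIntegral_mono_on ((hint2sq k).integrableOn)
                ((integrable_const 1).integrableOn) measurableSet_Ioc
                (fun y _ => pow_le_one₀ (hu0 _) (hu1 _))
            rwa [setIntegral_const, smul_eq_mul, mul_one] at h2
          calc c₁ * ∫ y in Ioc ρ r, (u (x₂ - y))^2 ∂(g k)
              ≤ c₁ * ((g k) (Ioc ρ r)).toReal := mul_le_mul_of_nonneg_left h1 hc₁pos.le
            _ ≤ δ/4 * ∫ y in Iic r, u (x₂ - y) ∂(g k) := mtop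
        rw [hsq, mul_add]
        linarith
    obtain ⟨k, hk1, hk2, hfin⟩ := final r htrunc H2r
    exact ⟨k, hk1, hk2, r, le_rfl, fun _ => rfl, hfin⟩
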